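/- arXiv:1608.07148 — 2 statements merged into one kernel-verified Lean document; each statement's English description precedes it below -/
import Mathlib

section
/- Let n : [0,∞) → [0,∞) be a bounded measurable size distribution supported in [KΔt, 1] with K, Δt > 0, and let k be a nonnegative integer. Then ∫_{KΔt}^1 (s - KΔt)^{k/2} n(s) ds = Σ_{n=0}^∞ a_n^{k/2} (KΔt)^n ∫_{KΔt}^1 s^{k/2 - n} n(s) ds, i.e. the evolved fractional moment equals the series in the negative-order moments m^{[KΔt,1]}_{k/2-n}. -/
open Real MeasureTheory

/-- Generalized binomial coefficient series coefficient: `(1-x)^α = Σ aₙ xⁿ`,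
`aₙ = (-1)ⁿ binom(α, n)`. -/
noncomputable def binSeriesCoeff (α : ℝ) (n : ℕ) : ℝ :=
  (-1) ^ n * (∏ i ∈ Finset.range n, (α - i)) / (n.factorial : ℝ)

lemma binSeriesCoeff_zero (α : ℝ) : binSeriesCoeff α 0 = 1 := by simp [binSeriesCoeff]

lemma binSeriesCoeff_succ (α : ℝ) (n : ℕ) :
    binSeriesCoeff α (n + 1) = binSeriesCoeff α n * ((n : ℝ) - α) / ((n : ℝ) + 1) := by
  have h1 : ((n.factorial : ℝ)) ≠ 0 := Nat.cast_ne_zero.mpr n.factorial_ne_zero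
  have h2 : ((n : ℝ) + 1) ≠ 0 := by positivity
  rw [binSeriesCoeff, binSeriesCoeff, Finset.prod_range_succ, Nat.factorial_succ]
  push_cast
  field_simp
  ring

lemma binSeriesCoeff_succ' (α : ℝ) (n : ℕ) :
    binSeriesCoeff α (n + 1) = -α / ((n : ℝ) + 1) * binSeriesCoeff (α - 1) n := by
  have h1 : ((n.factorial : ℝ)) ≠ 0 := Nat.cast_ne_zero.mpr n.factorial_ne_zero
  have h2 : ((n : ℝ) + 1) ≠ 0 := by positivity
  have hp : ∏ i ∈ Finset.range (n + 1), (α - i) = (∏ i ∈ Finset.range n, (α - 1 - i)) * α := by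
    rw [Finset.prod_range_succ']
    congr 1
    · exact Finset.prod_congr rfl fun i _ => by push_cast; ring
    · simp
  rw [binSeriesCoeff, binSeriesCoeff, hp, Nat.factorial_succ]
  push_cast
  field_simp
  ring

lemma sum_binSeriesCoeff (α : ℝ) (n : ℕ) :
    ∑ i ∈ Finset.range (n + 1), binSeriesCoeff α i = binSeriesCoeff (α - 1) n := by
  induction n with
  | zero => simp [binSeriesCoeff]
  | succ n ih =>
    have h2 : ((n : ℝ) + 1) ≠ 0 := by positivity
    rw [Finset.sum_range_succ, ih, binSeriesCoeff_succ' α n, binSeriesCoeff_succ (α - 1) n]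
    field_simp
    ring

lemma abs_binSeriesCoeff_telescope {α : ℝ} (hα : 0 ≤ α) {n : ℕ} (hn : α ≤ (n : ℝ) + 1) :
    |binSeriesCoeff α (n + 1)| =
      |binSeriesCoeff (α - 1) n| - |binSeriesCoeff (α - 1) (n + 1)| := by
  have h2 : (0:ℝ) < (n : ℝ) + 1 := by positivity
  have h1 : |binSeriesCoeff α (n + 1)| = α / ((n:ℝ) + 1) * |binSeriesCoeff (α - 1) n| := by
    rw [binSeriesCoeff_succ', abs_mul, abs_div, abs_neg, abs_of_nonneg hα, abs_of_pos h2]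
  have h3 : |binSeriesCoeff (α - 1) (n + 1)|
      = ((n:ℝ) + 1 - α) / ((n:ℝ) + 1) * |binSeriesCoeff (α - 1) n| := by
    rw [binSeriesCoeff_succ, abs_div, abs_mul, abs_of_pos h2,
      abs_of_nonneg (by linarith : (0:ℝ) ≤ (n:ℝ) - (α - 1))]
    ring_nf
  rw [h1, h3]
  field_simp
  ring

lemma summable_abs_binSeriesCoeff {α : ℝ} (hα : 0 ≤ α) :
    Summable fun n => |binSeriesCoeff α n| := by
  obtain ⟨N, hN⟩ : ∃ N : ℕ, α ≤ N := exists_nat_ge α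
  have htel : ∀ m : ℕ, ∑ j ∈ Finset.range m, |binSeriesCoeff α (N + 1 + j)|
      = |binSeriesCoeff (α - 1) N| - |binSeriesCoeff (α - 1) (N + m)| := by
    intro m
    induction m with
    | zero => simp
    | succ m ih =>
      rw [Finset.sum_range_succ, ih]
      have : N + 1 + m = (N + m) + 1 := by ring
      rw [this, abs_binSeriesCoeff_telescope hα (by push_cast; linarith)]
      have : N + m + 1 = N + (m + 1) := by ring
      rw [this]
      ring
  set c : ℝ := (∑ i ∈ Finset.range (N + 1), |binSeriesCoeff α i|) + |binSeriesCoeff (α - 1) N|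
    with hc
  apply summable_of_sum_range_le (c := c) (fun n => abs_nonneg _)
  intro M
  rcases le_or_gt M (N + 1) with hM | hM
  · have h1 : ∑ i ∈ Finset.range M, |binSeriesCoeff α i|
        ≤ ∑ i ∈ Finset.range (N + 1), |binSeriesCoeff α i| :=
      Finset.sum_le_sum_of_subset_of_nonneg (Finset.range_subset_range.mpr hM)
        (fun i _ _ => abs_nonneg _)
    have := abs_nonneg (binSeriesCoeff (α - 1) N)
    linarith
  · obtain ⟨m, rfl⟩ : ∃ m, M = (N + 1) + m := ⟨M - (N + 1), by omega⟩
    rw [Finset.sum_range_add, htel m]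
    have := abs_nonneg (binSeriesCoeff (α - 1) (N + m))
    simp only [hc]
    linarith

section BinSeries

variable {α : ℝ}

/-- Uniform summable bound for the term-wise derivatives on `|y| ≤ r < 1`. -/
lemma binSeries_deriv_bound (hα : 0 ≤ α) {r : ℝ} (hr0 : 0 < r) (hr1 : r < 1) :
    ∃ u : ℕ → ℝ, Summable u ∧
      ∀ y : ℝ, |y| ≤ r → ∀ n : ℕ,
        ‖binSeriesCoeff α n * ((n : ℝ) * y ^ (n - 1))‖ ≤ u n := by
  set A : ℝ := ∑' n, |binSeriesCoeff α n| with hA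
  have hs := summable_abs_binSeriesCoeff hα
  have hAle : ∀ n, |binSeriesCoeff α n| ≤ A := fun n =>
    hs.le_tsum n fun m _ => abs_nonneg _
  have hA0 : 0 ≤ A := le_trans (abs_nonneg _) (hAle 0)
  refine ⟨fun n => A / r * (((n : ℝ) + 1) * r ^ n), ?_, ?_⟩
  · have h1 : Summable fun n : ℕ => ((n : ℝ) + 1) * r ^ n := by
      have ha := summable_pow_mul_geometric_of_norm_lt_one (R := ℝ) 1
        (by rwa [Real.norm_eq_abs, abs_of_pos hr0])
      have hb := summable_geometric_of_lt_one hr0.le hr1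
      have := ha.add hb
      refine this.congr fun n => ?_
      push_cast
      ring
    exact h1.mul_left _
  · intro y hy n
    rcases n with _ | m
    · simp
      positivity
    · have hyn : |y| ^ m ≤ r ^ m := pow_le_pow_left₀ (abs_nonneg _) hy m
      have : ‖binSeriesCoeff α (m + 1) * (((m : ℝ) + 1) * y ^ m)‖
          = |binSeriesCoeff α (m + 1)| * (((m : ℝ) + 1) * |y| ^ m) := by
        rw [norm_mul, Real.norm_eq_abs, Real.norm_eq_abs, abs_mul, abs_pow,
          abs_of_nonneg (by positivity : (0:ℝ) ≤ (m : ℝ) + 1)]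
      push_cast
      push_cast at this
      rw [this]
      have hterm : |binSeriesCoeff α (m + 1)| * (((m : ℝ) + 1) * |y| ^ m)
          ≤ A * (((m : ℝ) + 1 + 1) * r ^ m) := by
        have h1 : ((m : ℝ) + 1) * |y| ^ m ≤ ((m : ℝ) + 1 + 1) * r ^ m := by
          apply mul_le_mul (by linarith) hyn (by positivity) (by positivity)
        exact mul_le_mul (hAle _) h1 (by positivity) hA0
      calc |binSeriesCoeff α (m + 1)| * (((m : ℝ) + 1) * |y| ^ m)
          ≤ A * (((m : ℝ) + 1 + 1) * r ^ m) := hterm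
        _ = A / r * (((m : ℝ) + 1 + 1) * (r ^ m * r)) := by field_simp
        _ = A / r * (((m : ℝ) + 1 + 1) * r ^ (m + 1)) := by rw [← pow_succ]

lemma binSeries_summable (hα : 0 ≤ α) {y : ℝ} (hy : |y| ≤ 1) :
    Summable fun n => binSeriesCoeff α n * y ^ n := by
  refine (summable_abs_binSeriesCoeff hα).of_norm_bounded fun n => ?_
  rw [norm_mul, Real.norm_eq_abs, Real.norm_eq_abs, abs_pow]
  calc |binSeriesCoeff α n| * |y| ^ n ≤ |binSeriesCoeff α n| * 1 := by
        exact mul_le_mul_of_nonneg_left (pow_le_one₀ (abs_nonneg _) hy) (abs_nonneg _)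
    _ = _ := mul_one _

lemma binSeries_hasDerivAt (hα : 0 ≤ α) {y : ℝ} (hy : y ∈ Set.Ioo (-1 : ℝ) 1) :
    HasDerivAt (fun z => ∑' n, binSeriesCoeff α n * z ^ n)
      (∑' n, binSeriesCoeff α n * ((n : ℝ) * y ^ (n - 1))) y := by
  have hyabs : |y| < 1 := abs_lt.mpr ⟨hy.1, hy.2⟩
  set r : ℝ := (|y| + 1) / 2 with hr
  have hr0 : 0 < r := by positivity
  have hr1 : r < 1 := by rw [hr]; linarith
  have hyr : |y| < r := by rw [hr]; linarith [abs_nonneg y]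
  obtain ⟨u, hu, hub⟩ := binSeries_deriv_bound hα hr0 hr1
  refine hasDerivAt_tsum_of_isPreconnected (𝕜 := ℝ) (F := ℝ)
    (g := fun n z => binSeriesCoeff α n * z ^ n)
    (g' := fun n z => binSeriesCoeff α n * ((n : ℝ) * z ^ (n - 1))) (y₀ := 0) hu isOpen_Ioo (convex_Ioo _ _).isPreconnected
    (fun n z hz => ?_) (fun n z hz => ?_) ?_ ?_ (Set.mem_Ioo.mpr (abs_lt.mp hyr))
  · exact (hasDerivAt_pow n z).const_mul (binSeriesCoeff α n)
  · exact hub z (abs_lt.mpr ⟨hz.1, hz.2⟩).le n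
  · exact Set.mem_Ioo.mpr ⟨by linarith, hr0⟩
  · refine summable_of_ne_finset_zero (s := {0}) fun n hn => ?_
    simp only [Finset.mem_singleton] at hn
    simp [zero_pow hn]

end BinSeries

section BinSeries2
variable {α : ℝ}

lemma binSeries_deriv_summable (hα : 0 ≤ α) {y : ℝ} (hy : |y| < 1) :
    Summable fun n => binSeriesCoeff α n * ((n : ℝ) * y ^ (n - 1)) := by
  set r : ℝ := (|y| + 1) / 2 with hr
  have hr0 : 0 < r := by positivity
  have hr1 : r < 1 := by rw [hr]; linarith
  have hyr : |y| ≤ r := by rw [hr]; linarith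
  obtain ⟨u, hu, hub⟩ := binSeries_deriv_bound hα hr0 hr1
  exact hu.of_norm_bounded (hub y hyr)

/-- The ODE `(1-y)·f'(y) = -α·f(y)` for the sum of the binomial series. -/
lemma binSeries_ode (hα : 0 ≤ α) {y : ℝ} (hy : |y| < 1) :
    (1 - y) * (∑' n, binSeriesCoeff α n * ((n : ℝ) * y ^ (n - 1)))
      = -α * ∑' n, binSeriesCoeff α n * y ^ n := by
  set a := binSeriesCoeff α with ha
  set D : ℝ := ∑' n, a n * ((n : ℝ) * y ^ (n - 1)) with hD
  set f : ℝ := ∑' n, a n * y ^ n with hf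
  have sD : HasSum (fun n => a n * ((n : ℝ) * y ^ (n - 1))) D :=
    (binSeries_deriv_summable hα hy).hasSum
  have sf : HasSum (fun n => a n * y ^ n) f := (binSeries_summable hα hy.le).hasSum
  -- shift the derivative series
  have hshift : HasSum (fun n => a (n + 1) * (((n : ℝ) + 1) * y ^ n)) D := by
    have h0 : HasSum (fun n => a n * ((n : ℝ) * y ^ (n - 1)))
        (D + ∑ i ∈ Finset.range 1, a i * ((i : ℝ) * y ^ (i - 1))) := by
      simpa using sD
    have := (hasSum_nat_add_iff (f := fun n => a n * ((n : ℝ) * y ^ (n - 1))) 1).mpr h0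
    refine this.congr_fun fun n => ?_
    push_cast
    rfl
  -- termwise recurrence: a (n+1) * (n+1) = (n - α) * a n
  have hshift' : HasSum (fun (n : ℕ) => (((n : ℝ) - α) * a n) * y ^ n) D := by
    refine hshift.congr_fun fun n => ?_
    have h2 : ((n : ℝ) + 1) ≠ 0 := by positivity
    rw [ha, binSeriesCoeff_succ α n]
    field_simp
  have hyD : HasSum (fun (n : ℕ) => ((n : ℝ) * a n) * y ^ n) (y * D) := by
    refine (sD.mul_left y).congr_fun fun n => ?_
    rcases n with _ | m
    · simp
    · push_cast
      ring
  have hcomb : HasSum (fun (n : ℕ) => ((n : ℝ) * a n) * y ^ n) (D + α * f) := by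
    have := hshift'.add (sf.mul_left α)
    refine this.congr_fun fun n => ?_
    ring
  have heq : y * D = D + α * f := hyD.unique hcomb
  linarith

lemma binSeries_hasSum (hα : 0 ≤ α) {x : ℝ} (hx0 : 0 ≤ x) (hx1 : x < 1) :
    HasSum (fun n => binSeriesCoeff α n * x ^ n) ((1 - x) ^ α) := by
  set a := binSeriesCoeff α with ha
  set f : ℝ → ℝ := fun z => ∑' n, a n * z ^ n with hf
  set G : ℝ → ℝ := fun z => f z * (1 - z) ^ (-α) with hG
  -- G has derivative 0 on [0, x]
  have hGderiv : ∀ y ∈ Set.Icc (0 : ℝ) x, HasDerivAt G 0 y := by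
    intro y hy
    have hyabs : |y| < 1 := abs_lt.mpr ⟨by linarith [hy.1], by linarith [hy.2]⟩
    have hb : (0 : ℝ) < 1 - y := by linarith [hy.2]
    set D : ℝ := ∑' n, a n * ((n : ℝ) * y ^ (n - 1)) with hD
    have h1 : HasDerivAt f D y :=
      binSeries_hasDerivAt hα (Set.mem_Ioo.mpr (abs_lt.mp hyabs))
    have hin : HasDerivAt (fun z : ℝ => 1 - z) (-1) y := by
      simpa using (hasDerivAt_id y).const_sub 1
    have h2 : HasDerivAt (fun z : ℝ => (1 - z) ^ (-α))
        ((-α * (1 - y) ^ (-α - 1)) * (-1)) y :=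
      (Real.hasDerivAt_rpow_const (p := -α) (Or.inl hb.ne')).comp y hin
    have h3 := h1.mul h2
    have hode := binSeries_ode hα hyabs
    have e1 : (1 - y) ^ (-α) = (1 - y) * (1 - y) ^ (-α - 1) := by
      have h := (Real.rpow_add hb 1 (-α - 1)).symm
      rw [Real.rpow_one] at h
      rw [show (1 : ℝ) + (-α - 1) = -α by ring] at h
      exact h.symm
    have hzero : D * (1 - y) ^ (-α) + f y * (-α * (1 - y) ^ (-α - 1) * -1) = 0 := by
      rw [e1]
      have hth : (1 - y) * D = -α * f y := hode
      linear_combination (1 - y) ^ (-α - 1) * hth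
    rw [hG]
    exact h3.congr_deriv hzero
  -- G is constant on [0, x], equal to G 0 = 1
  have hcont : ContinuousOn G (Set.Icc 0 x) := fun y hy =>
    (hGderiv y hy).continuousAt.continuousWithinAt
  have hconst : G x = G 0 :=
    constant_of_has_deriv_right_zero hcont
      (fun y hy => ((hGderiv y ⟨hy.1, hy.2.le⟩).hasDerivWithinAt)) x
      (Set.mem_Icc.mpr ⟨hx0, le_rfl⟩)
  have hG0 : G 0 = 1 := by
    have hf0 : f 0 = 1 := by
      rw [hf]
      simp only
      rw [tsum_eq_single 0 (fun n hn => by simp [zero_pow hn])]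
      simp [ha, binSeriesCoeff_zero]
    simp [hG, hf0]
  -- conclude
  have hb : (0 : ℝ) < 1 - x := by linarith
  have hfx : f x = (1 - x) ^ α := by
    have h := hconst.trans hG0
    rw [hG] at h
    simp only at h
    have hne : ((1 - x) ^ α) ≠ 0 := (Real.rpow_pos_of_pos hb _).ne'
    rw [Real.rpow_neg hb.le] at h
    field_simp at h
    exact h
  rw [show ((1 : ℝ) - x) ^ α = f x from hfx.symm]
  exact (binSeries_summable hα (by rw [abs_of_nonneg hx0]; exact hx1.le)).hasSum

end BinSeries2

/-- The evolved fractional moment `∫ (s-KΔt)^{k/2} n(s) ds` equals the series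
`Σₙ aₙ^{k/2} (KΔt)ⁿ m^{[KΔt,1]}_{k/2-n}` in the (possibly negative order) fractional moments
of the size distribution on `[KΔt,1]`. -/
theorem evolved_fractional_moment_series (K Δt : ℝ) (hK : 0 < K) (hΔt : 0 < Δt)
    (h1 : K * Δt ≤ 1) (n : ℝ → ℝ) (hmeas : Measurable n) (hpos : ∀ s, 0 ≤ n s)
    (hbdd : ∃ C, ∀ s, n s ≤ C)
    (hsupp : Function.support n ⊆ Set.Icc (K * Δt) 1) (k : ℕ) :
    HasSum
      (fun i : ℕ => binSeriesCoeff ((k : ℝ) / 2) i * (K * Δt) ^ i *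
        ∫ s in Set.Icc (K * Δt) 1, s ^ ((k : ℝ) / 2 - i) * n s)
      (∫ s in Set.Icc (K * Δt) 1, (s - K * Δt) ^ ((k : ℝ) / 2) * n s) := by
  obtain ⟨C, hC⟩ := hbdd
  have hC0 : (0 : ℝ) ≤ C := le_trans (hpos 0) (hC 0)
  set c : ℝ := K * Δt with hc
  have hc0 : 0 < c := mul_pos hK hΔt
  set α : ℝ := (k : ℝ) / 2 with hα
  have hα0 : 0 ≤ α := by positivity
  set a := binSeriesCoeff α with ha
  set F : ℕ → ℝ → ℝ := fun i s => a i * c ^ i * (s ^ (α - (i : ℝ)) * n s) with hF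
  -- pointwise bound
  have hbound : ∀ (i : ℕ), ∀ s ∈ Set.Icc c 1, |F i s| ≤ |a i| * C := by
    intro i s hs
    have hs0 : 0 < s := lt_of_lt_of_le hc0 hs.1
    have hpw : c ^ i * s ^ (α - (i : ℝ)) ≤ 1 := by
      have e1 : s ^ (α - (i : ℝ)) = s ^ α * (s ^ i)⁻¹ := by
        rw [Real.rpow_sub hs0, ← Real.rpow_natCast s i, div_eq_mul_inv]
      have e2 : c ^ i * (s ^ i)⁻¹ = (c / s) ^ i := by
        rw [div_pow, div_eq_mul_inv]
      have h3 : (c / s) ^ i ≤ 1 :=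
        pow_le_one₀ (by positivity) ((div_le_one hs0).mpr hs.1)
      have h4 : s ^ α ≤ 1 := Real.rpow_le_one hs0.le hs.2 hα0
      calc c ^ i * s ^ (α - (i : ℝ)) = (c / s) ^ i * s ^ α := by rw [e1, ← e2]; ring
        _ ≤ 1 * 1 := mul_le_mul h3 h4 (Real.rpow_nonneg hs0.le _) zero_le_one
        _ = 1 := mul_one 1
    have hFnn : |F i s| = |a i| * (c ^ i * (s ^ (α - (i : ℝ)) * n s)) := by
      rw [hF]
      simp only
      rw [abs_mul, abs_mul, abs_of_nonneg (by positivity : (0:ℝ) ≤ c ^ i),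
        abs_of_nonneg (mul_nonneg (Real.rpow_nonneg hs0.le _) (hpos s)), mul_assoc]
    rw [hFnn]
    refine mul_le_mul_of_nonneg_left ?_ (abs_nonneg _)
    calc c ^ i * (s ^ (α - (i : ℝ)) * n s) = (c ^ i * s ^ (α - (i : ℝ))) * n s := by ring
      _ ≤ 1 * C := mul_le_mul hpw (hC s) (hpos s)
            (by positivity)
      _ = C := one_mul C
  -- integrability
  have hmeasF : ∀ i : ℕ, AEStronglyMeasurable (F i) (volume.restrict (Set.Icc c 1)) := by
    intro i
    have hcon : ContinuousOn (fun s : ℝ => s ^ (α - (i : ℝ))) (Set.Icc c 1) :=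
      ContinuousOn.rpow_const continuousOn_id
        (fun s hs => Or.inl (ne_of_gt (lt_of_lt_of_le hc0 hs.1)))
    exact (((hcon.aestronglyMeasurable measurableSet_Icc).mul
      hmeas.aestronglyMeasurable.restrict).const_mul _)
  have hFint : ∀ i : ℕ, Integrable (F i) (volume.restrict (Set.Icc c 1)) := by
    intro i
    refine Integrable.mono' (g := fun _ => |a i| * C)
      (integrableOn_const measure_Icc_lt_top.ne) (hmeasF i) ?_
    filter_upwards [ae_restrict_mem measurableSet_Icc] with s hs
    rw [Real.norm_eq_abs]
    exact hbound i s hs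
  -- summability of integrals of norms
  have hFsum : Summable fun i : ℕ => ∫ s in Set.Icc c 1, ‖F i s‖ := by
    have hsa := summable_abs_binSeriesCoeff hα0
    refine Summable.of_nonneg_of_le (fun i => integral_nonneg fun s => norm_nonneg _)
      (fun i => ?_) (hsa.mul_right (C * (volume (Set.Icc c 1)).toReal))
    calc ∫ s in Set.Icc c 1, ‖F i s‖
        ≤ ∫ _ in Set.Icc c 1, |a i| * C :=
          setIntegral_mono_on (hFint i).norm
            (integrableOn_const measure_Icc_lt_top.ne) measurableSet_Icc
            (fun s hs => by rw [Real.norm_eq_abs]; exact hbound i s hs)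
      _ = (volume (Set.Icc c 1)).toReal • (|a i| * C) := setIntegral_const _
      _ = |a i| * (C * (volume (Set.Icc c 1)).toReal) := by
          rw [smul_eq_mul]; ring
  -- interchange
  have H := hasSum_integral_of_summable_integral_norm hFint hFsum
  -- a.e. identification of the pointwise sum
  have hane : ∀ᵐ s : ℝ ∂volume, s ≠ c := by
    rw [Filter.eventually_iff, mem_ae_iff]
    simp [Real.volume_singleton, show {s : ℝ | s ≠ c}ᶜ = {c} by ext; simp]
  have hae : ∀ᵐ s ∂volume.restrict (Set.Icc c 1),
      (∑' i, F i s) = (s - c) ^ α * n s := by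
    filter_upwards [ae_restrict_mem measurableSet_Icc, ae_restrict_of_ae hane] with s hs hsne
    by_cases hns : n s = 0
    · simp [hF, hns]
    · have hs1 : c < s := lt_of_le_of_ne hs.1 (Ne.symm hsne)
      have hs0 : 0 < s := hc0.trans hs1
      have hx0 : 0 ≤ c / s := by positivity
      have hx1 : c / s < 1 := (div_lt_one hs0).mpr hs1
      have hb := (binSeries_hasSum hα0 hx0 hx1).mul_right (s ^ α * n s)
      have hb2 : HasSum (fun i => F i s) ((1 - c / s) ^ α * (s ^ α * n s)) := by
        refine hb.congr_fun fun i => ?_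
        rw [hF]
        simp only
        have e1 : s ^ (α - (i : ℝ)) = s ^ α / s ^ i := by
          rw [Real.rpow_sub hs0, Real.rpow_natCast]
        rw [e1, div_pow]
        have : (s : ℝ) ^ i ≠ 0 := pow_ne_zero _ hs0.ne'
        field_simp
        rfl
      have hval : (1 - c / s) ^ α * (s ^ α * n s) = (s - c) ^ α * n s := by
        have h1x : (0:ℝ) ≤ 1 - c / s := by linarith
        rw [← mul_assoc, ← Real.mul_rpow h1x hs0.le]
        congr 2
        field_simp
      rw [hval] at hb2
      exact hb2.tsum_eq
  rw [integral_congr_ae hae] at H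
  refine H.congr_fun fun i => ?_
  rw [← integral_const_mul]
end

section
/- Suppose the vector (m₀, m_{1/2}, …, m_{N/2}) is in the interior of the fractional moment space, i.e. there exists a nonnegative integrable f on [0,1], f ≢ 0, with m_{k/2} = ∫₀¹ s^{k/2} f(s) ds for k = 0,…,N, and such that f is positive on a set of positive measure in every subinterval. Then the function G(λ) = ∫₀¹ exp(−λ₀ − Σ_{i=1}^N λ_i S^{i/2}) dS + Σ_{k=0}^N λ_k m_{k/2} is continuous on ℝ^{N+1} and G(λ) → +∞ as ‖λ‖ → +∞. -/
open Real MeasureTheory Filter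

noncomputable def Qp (N : ℕ) (α : Fin (N+1) → ℝ) (s : ℝ) : ℝ :=
  ∑ l : Fin (N+1), α l * s ^ (((l : ℕ) : ℝ) / 2)

lemma Qp_cont (N : ℕ) (α : Fin (N+1) → ℝ) : Continuous (Qp N α) := by
  apply continuous_finset_sum
  intro l _
  apply Continuous.mul continuous_const
  rw [continuous_iff_continuousAt]
  intro x
  exact Real.continuousAt_rpow_const x _ (Or.inr (by positivity))

lemma rpow_cont (k : ℕ) : Continuous (fun s : ℝ => s ^ ((k : ℝ) / 2)) := by
  rw [continuous_iff_continuousAt]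
  intro x
  exact Real.continuousAt_rpow_const x _ (Or.inr (by positivity))

lemma rpow_mul_f_int (N : ℕ) (f : ℝ → ℝ) (hf_int : IntegrableOn f (Set.Icc (0:ℝ) 1)) (k : ℕ) :
    IntegrableOn (fun s => s ^ ((k : ℝ) / 2) * f s) (Set.Icc (0:ℝ) 1) := by
  apply MeasureTheory.Integrable.bdd_mul (c := 1) hf_int
    ((rpow_cont k).aestronglyMeasurable)
  filter_upwards [ae_restrict_mem measurableSet_Icc] with s hs
  rw [Real.norm_eq_abs, abs_of_nonneg (Real.rpow_nonneg hs.1 _)]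
  exact Real.rpow_le_one hs.1 hs.2 (by positivity)

lemma sum_m_eq (N : ℕ) (f : ℝ → ℝ) (hf_int : IntegrableOn f (Set.Icc (0:ℝ) 1))
    (m : Fin (N + 1) → ℝ)
    (hm : ∀ k : Fin (N + 1),
      m k = ∫ s in Set.Icc (0 : ℝ) 1, s ^ (((k : ℕ) : ℝ) / 2) * f s)
    (α : Fin (N+1) → ℝ) :
    ∑ k : Fin (N+1), α k * m k = ∫ s in Set.Icc (0:ℝ) 1, Qp N α s * f s := by
  have hint : ∀ k : Fin (N+1), IntegrableOn
      (fun s => α k * (s ^ (((k:ℕ) : ℝ) / 2) * f s)) (Set.Icc (0:ℝ) 1) :=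
    fun k => (rpow_mul_f_int N f hf_int k).const_mul _
  calc ∑ k : Fin (N+1), α k * m k
      = ∑ k : Fin (N+1), ∫ s in Set.Icc (0:ℝ) 1, α k * (s ^ (((k:ℕ):ℝ)/2) * f s) := by
        refine Finset.sum_congr rfl fun k _ => ?_
        rw [hm k, ← MeasureTheory.integral_const_mul]
    _ = ∫ s in Set.Icc (0:ℝ) 1, ∑ k : Fin (N+1), α k * (s ^ (((k:ℕ):ℝ)/2) * f s) := by
        rw [MeasureTheory.integral_finset_sum]
        exact fun k _ => hint k
    _ = ∫ s in Set.Icc (0:ℝ) 1, Qp N α s * f s := by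
        refine setIntegral_congr_fun measurableSet_Icc fun s _ => ?_
        simp [Qp, Finset.sum_mul, mul_assoc]

lemma Qp_sq (N : ℕ) (α : Fin (N+1) → ℝ) {u : ℝ} (hu : 0 ≤ u) :
    Qp N α (u ^ 2) = ∑ l : Fin (N+1), α l * u ^ (l : ℕ) := by
  unfold Qp
  congr 1
  ext l
  congr 1
  rw [← Real.rpow_natCast u 2, ← Real.rpow_mul hu, ← Real.rpow_natCast u (l : ℕ)]
  congr 1
  ring

lemma Qp_exists_ne (N : ℕ) {α : Fin (N+1) → ℝ} (hα : α ≠ 0) :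
    ∃ s ∈ Set.Icc (0:ℝ) 1, Qp N α s ≠ 0 := by
  by_contra h
  push_neg at h
  -- polynomial
  set p : Polynomial ℝ := ∑ l : Fin (N+1), Polynomial.C (α l) * Polynomial.X ^ (l : ℕ) with hp
  have hroots : ∀ u ∈ Set.Icc (0:ℝ) 1, p.IsRoot u := by
    intro u hu
    have h2 : u ^ 2 ∈ Set.Icc (0:ℝ) 1 := ⟨by positivity, by nlinarith [hu.1, hu.2]⟩
    have := h _ h2
    rw [Qp_sq N α hu.1] at this
    simp [Polynomial.IsRoot, hp, Polynomial.eval_finset_sum, this]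
  have hpz : p = 0 := by
    apply Polynomial.eq_zero_of_infinite_isRoot
    apply Set.Infinite.mono (s := Set.Icc (0:ℝ) 1)
    · intro u hu; exact hroots u hu
    · exact Set.Icc_infinite (show (0:ℝ) < 1 by norm_num)
  apply hα
  funext j
  have := congrArg (fun q => Polynomial.coeff q (j : ℕ)) hpz
  simp only [hp, Polynomial.finset_sum_coeff, Polynomial.coeff_C_mul,
    Polynomial.coeff_X_pow, Polynomial.coeff_zero, mul_ite, mul_one, mul_zero] at this
  simp only [Fin.val_inj] at this
  rw [Finset.sum_ite_eq] at this
  simpa using this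

lemma Qp_sub (N : ℕ) (α β : Fin (N+1) → ℝ) (s : ℝ) :
    Qp N α s - Qp N β s = Qp N (α - β) s := by
  simp [Qp, ← Finset.sum_sub_distrib, sub_mul]

lemma Qp_smul (N : ℕ) (t : ℝ) (α : Fin (N+1) → ℝ) (s : ℝ) :
    Qp N (t • α) s = t * Qp N α s := by
  simp [Qp, Finset.mul_sum, mul_assoc]

lemma Qp_abs_le (N : ℕ) (α : Fin (N+1) → ℝ) {s : ℝ} (hs : s ∈ Set.Icc (0:ℝ) 1) :
    |Qp N α s| ≤ (N+1) * ‖α‖ := by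
  calc |Qp N α s| ≤ ∑ l : Fin (N+1), |α l * s ^ (((l : ℕ) : ℝ) / 2)| :=
        Finset.abs_sum_le_sum_abs _ _
    _ ≤ ∑ l : Fin (N+1), ‖α‖ := by
        apply Finset.sum_le_sum
        intro l _
        rw [abs_mul]
        calc |α l| * |s ^ (((l : ℕ) : ℝ) / 2)| ≤ ‖α‖ * 1 := by
              apply mul_le_mul (norm_le_pi_norm α l) ?_ (abs_nonneg _) (norm_nonneg _)
              rw [abs_of_nonneg (Real.rpow_nonneg hs.1 _)]
              exact Real.rpow_le_one hs.1 hs.2 (by positivity)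
          _ = ‖α‖ := mul_one _
    _ = (N+1) * ‖α‖ := by simp [Finset.sum_const, Finset.card_univ]

noncomputable def Jfun (N : ℕ) (m : Fin (N+1) → ℝ) (α : Fin (N+1) → ℝ) : ℝ :=
  (∫ s in Set.Icc (0:ℝ) 1, max (-(Qp N α s)) 0) + max (∑ k : Fin (N+1), α k * m k) 0

lemma Jfun_cont (N : ℕ) (m : Fin (N+1) → ℝ) : Continuous (Jfun N m) := by
  apply Continuous.add
  · -- Lipschitz
    have key : ∀ α β : Fin (N+1) → ℝ,
        (∫ s in Set.Icc (0:ℝ) 1, max (-(Qp N α s)) 0) -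
          (∫ s in Set.Icc (0:ℝ) 1, max (-(Qp N β s)) 0) ≤ (N+1) * ‖α - β‖ := by
      intro α β
      have hIα : IntegrableOn (fun s => max (-(Qp N α s)) 0) (Set.Icc (0:ℝ) 1) :=
        (((Qp_cont N α).neg).max continuous_const).integrableOn_Icc
      have hIβ : IntegrableOn (fun s => max (-(Qp N β s)) 0) (Set.Icc (0:ℝ) 1) :=
        (((Qp_cont N β).neg).max continuous_const).integrableOn_Icc
      rw [← MeasureTheory.integral_sub hIα hIβ]
      calc (∫ s in Set.Icc (0:ℝ) 1, (max (-(Qp N α s)) 0 - max (-(Qp N β s)) 0))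
          ≤ ∫ s in Set.Icc (0:ℝ) 1, (N+1) * ‖α - β‖ := by
            apply setIntegral_mono_on (hIα.sub hIβ)
              ((integrableOn_const_iff enorm_ne_top).mpr (Or.inr (by simp [Real.volume_Icc])))
              measurableSet_Icc
            intro s hs
            calc max (-(Qp N α s)) 0 - max (-(Qp N β s)) 0
                ≤ |max (-(Qp N α s)) 0 - max (-(Qp N β s)) 0| := le_abs_self _
              _ ≤ |(-(Qp N α s)) - (-(Qp N β s))| := abs_max_sub_max_le_abs _ _ _
              _ = |Qp N β s - Qp N α s| := by congr 1; ring
              _ = |Qp N (β - α) s| := by rw [Qp_sub]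
              _ ≤ (N+1) * ‖β - α‖ := Qp_abs_le N _ hs
              _ = (N+1) * ‖α - β‖ := by rw [norm_sub_rev]
        _ = (N+1) * ‖α - β‖ := by
            rw [setIntegral_const]
            simp [Real.volume_Icc]
    have lip : LipschitzWith (⟨N+1, by positivity⟩ : NNReal)
        (fun α : Fin (N+1) → ℝ => ∫ s in Set.Icc (0:ℝ) 1, max (-(Qp N α s)) 0) := by
      apply LipschitzWith.of_dist_le_mul
      intro α β
      rw [Real.dist_eq, dist_eq_norm]
      change _ ≤ ((N:ℝ)+1) * _
      rw [abs_le]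
      constructor
      · have := key β α
        rw [norm_sub_rev] at this
        linarith
      · exact key α β
    exact lip.continuous
  · apply Continuous.max ?_ continuous_const
    exact continuous_finset_sum _ fun k _ => (continuous_apply k).mul continuous_const

lemma exists_subinterval (N : ℕ) (α : Fin (N+1) → ℝ) {s₁ : ℝ} (hs₁ : s₁ ∈ Set.Icc (0:ℝ) 1)
    (hQ : 0 < Qp N α s₁) :
    ∃ a b : ℝ, 0 ≤ a ∧ a < b ∧ b ≤ 1 ∧ ∀ s ∈ Set.Icc a b, Qp N α s₁ / 2 < Qp N α s := by
  have hc := (Qp_cont N α).continuousAt (x := s₁)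
  rw [Metric.continuousAt_iff] at hc
  obtain ⟨δ, hδ, hball⟩ := hc (Qp N α s₁ / 2) (by linarith)
  refine ⟨max 0 (s₁ - δ/2), min 1 (s₁ + δ/2), le_max_left _ _, ?_, min_le_left _ _, ?_⟩
  · rcases lt_or_eq_of_le hs₁.2 with h1 | h1
    · apply lt_of_le_of_lt (b := s₁)
      · exact max_le hs₁.1 (by linarith)
      · exact lt_min h1 (by linarith)
    · rw [h1]
      apply max_lt <;> apply lt_min <;> linarith
  · intro s hs
    have h1 : s₁ - δ/2 ≤ s := le_trans (le_max_right _ _) hs.1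
    have h2 : s ≤ s₁ + δ/2 := le_trans hs.2 (min_le_right _ _)
    have : dist s s₁ < δ := by
      rw [Real.dist_eq, abs_lt]; constructor <;> linarith
    have := hball this
    rw [Real.dist_eq, abs_lt] at this
    linarith [this.1]

lemma Jfun_pos (N : ℕ) (f : ℝ → ℝ) (hf_int : IntegrableOn f (Set.Icc (0 : ℝ) 1))
    (hf_nonneg : ∀ s ∈ Set.Icc (0 : ℝ) 1, 0 ≤ f s)
    (hf_pos : ∀ a b : ℝ, 0 ≤ a → a < b → b ≤ 1 →
      0 < volume {s ∈ Set.Icc a b | 0 < f s})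
    (m : Fin (N + 1) → ℝ)
    (hm : ∀ k : Fin (N + 1),
      m k = ∫ s in Set.Icc (0 : ℝ) 1, s ^ (((k : ℕ) : ℝ) / 2) * f s)
    (α : Fin (N+1) → ℝ) (hα : ‖α‖ = 1) :
    0 < Jfun N m α := by
  by_contra hJ
  push_neg at hJ
  have hInonneg : 0 ≤ ∫ s in Set.Icc (0:ℝ) 1, max (-(Qp N α s)) 0 :=
    setIntegral_nonneg measurableSet_Icc (fun s _ => le_max_right _ _)
  have hMnonneg : (0:ℝ) ≤ max (∑ k : Fin (N+1), α k * m k) 0 := le_max_right _ _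
  have hI : (∫ s in Set.Icc (0:ℝ) 1, max (-(Qp N α s)) 0) = 0 := by
    unfold Jfun at hJ; linarith
  have hM : ∑ k : Fin (N+1), α k * m k ≤ 0 := by
    unfold Jfun at hJ
    by_contra hM'
    push_neg at hM'
    rw [max_eq_left hM'.le] at hJ
    linarith
  -- Q ≥ 0 on Icc
  have hQnonneg : ∀ s ∈ Set.Icc (0:ℝ) 1, 0 ≤ Qp N α s := by
    intro s₀ hs₀
    by_contra hneg
    push_neg at hneg
    -- -Q is positive at s₀ ; find an interval where max(-Q,0) ≥ (-Q s₀)/2 > 0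
    obtain ⟨a, b, ha, hab, hb, hgt⟩ := exists_subinterval N (-α) (s₁ := s₀) hs₀ (by
      rw [show Qp N (-α) s₀ = -(Qp N α s₀) by
        have := Qp_smul N (-1) α s₀; simpa using this]
      linarith)
    have hQneg : Qp N (-α) s₀ = -(Qp N α s₀) := by
      have := Qp_smul N (-1) α s₀; simpa using this
    have hsub : Set.Icc a b ⊆ Set.Icc (0:ℝ) 1 := Set.Icc_subset_Icc ha hb
    have hlower : ∫ s in Set.Icc a b, max (-(Qp N α s)) 0 ≤
        ∫ s in Set.Icc (0:ℝ) 1, max (-(Qp N α s)) 0 := by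
      apply setIntegral_mono_set
        ((((Qp_cont N α).neg).max continuous_const).integrableOn_Icc)
        (Filter.Eventually.of_forall fun s => le_max_right _ _)
        (HasSubset.Subset.eventuallyLE hsub)
    have hlower2 : (b - a) * (-(Qp N α s₀) / 2) ≤ ∫ s in Set.Icc a b, max (-(Qp N α s)) 0 := by
      have : ∫ s in Set.Icc a b, (-(Qp N α s₀) / 2) ≤ ∫ s in Set.Icc a b, max (-(Qp N α s)) 0 := by
        apply setIntegral_mono_on
          ((integrableOn_const_iff enorm_ne_top).mpr (Or.inr (by simp [Real.volume_Icc])))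
          ((((Qp_cont N α).neg).max continuous_const).integrableOn_Icc)
          measurableSet_Icc
        intro s hs
        have := hgt s hs
        rw [hQneg] at this
        have h2 : Qp N (-α) s = -(Qp N α s) := by
          have := Qp_smul N (-1) α s; simpa using this
        rw [h2] at this
        exact le_trans this.le (le_max_left _ _)
      rw [setIntegral_const] at this
      rw [Real.volume_real_Icc_of_le hab.le] at this
      simpa [smul_eq_mul] using this
    have : 0 < (b - a) * (-(Qp N α s₀) / 2) := by
      apply mul_pos (by linarith) (by linarith)
    linarith
  -- ∫ Q f = 0 and Q f = 0 a.e.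
  have hQf_int : IntegrableOn (fun s => Qp N α s * f s) (Set.Icc (0:ℝ) 1) := by
    apply MeasureTheory.Integrable.bdd_mul (c := (N+1) * ‖α‖) hf_int
      ((Qp_cont N α).aestronglyMeasurable)
    filter_upwards [ae_restrict_mem measurableSet_Icc] with s hs
    exact Qp_abs_le N α hs
  have hsum : ∑ k : Fin (N+1), α k * m k = ∫ s in Set.Icc (0:ℝ) 1, Qp N α s * f s :=
    sum_m_eq N f hf_int m hm α
  have hQf_nonneg : ∀ᵐ s ∂(volume.restrict (Set.Icc (0:ℝ) 1)), 0 ≤ Qp N α s * f s := by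
    filter_upwards [ae_restrict_mem measurableSet_Icc] with s hs
    exact mul_nonneg (hQnonneg s hs) (hf_nonneg s hs)
  have hint_zero : (∫ s in Set.Icc (0:ℝ) 1, Qp N α s * f s) = 0 := by
    have h1 : 0 ≤ ∫ s in Set.Icc (0:ℝ) 1, Qp N α s * f s :=
      integral_nonneg_of_ae hQf_nonneg
    rw [← hsum] at h1 ⊢
    linarith
  have hae : (fun s => Qp N α s * f s) =ᵐ[volume.restrict (Set.Icc (0:ℝ) 1)] 0 :=
    (MeasureTheory.integral_eq_zero_iff_of_nonneg_ae hQf_nonneg hQf_int).mp hint_zero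
  -- find interval where Q > 0
  have hα0 : α ≠ 0 := by intro h; rw [h] at hα; simp at hα
  obtain ⟨s₁, hs₁, hQ1⟩ := Qp_exists_ne N hα0
  have hQ1pos : 0 < Qp N α s₁ := lt_of_le_of_ne (hQnonneg s₁ hs₁) (Ne.symm hQ1)
  obtain ⟨a, b, ha, hab, hb, hgt⟩ := exists_subinterval N α hs₁ hQ1pos
  have hposf := hf_pos a b ha hab hb
  -- on {s ∈ Icc a b | 0 < f s}, Q f > 0, contradicting hae
  have hnull : volume ({s | Qp N α s * f s ≠ 0} ∩ Set.Icc (0:ℝ) 1) = 0 := by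
    have h0 : (volume.restrict (Set.Icc (0:ℝ) 1)) {s | Qp N α s * f s ≠ 0} = 0 := by
      apply MeasureTheory.ae_iff.mp
      filter_upwards [hae] with s hs using by simpa using hs
    rwa [Measure.restrict_apply' measurableSet_Icc] at h0
  have hsubE : {s | s ∈ Set.Icc a b ∧ 0 < f s} ⊆
      {s | Qp N α s * f s ≠ 0} ∩ Set.Icc (0:ℝ) 1 := by
    intro s hs
    have hQs : 0 < Qp N α s := lt_trans (half_pos hQ1pos) (hgt s hs.1)
    exact ⟨ne_of_gt (mul_pos hQs hs.2), Set.Icc_subset_Icc ha hb hs.1⟩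
  have hzero := measure_mono_null hsubE hnull
  rw [hzero] at hposf
  exact lt_irrefl 0 hposf

lemma key_lower (N : ℕ) (m : Fin (N + 1) → ℝ) (c : ℝ) (hcpos : 0 < c)
    (t : ℝ) (ht : 0 < t) (α : Fin (N+1) → ℝ) (hα : ‖α‖ = 1)
    (hJ : c ≤ Jfun N m α) :
    min (t * (c/2)) ((c/4)/(N+1) * Real.exp (t * (c/4)) - t * (∑ k : Fin (N+1), |m k|)) ≤
      (∫ s in Set.Icc (0:ℝ) 1, Real.exp (-(t * Qp N α s))) + t * ∑ k : Fin (N+1), α k * m k := by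
  set M := ∑ k : Fin (N+1), α k * m k with hM
  set Cm := ∑ k : Fin (N+1), |m k| with hCm
  have hexp_int : IntegrableOn (fun s => Real.exp (-(t * Qp N α s))) (Set.Icc (0:ℝ) 1) :=
    (Real.continuous_exp.comp ((continuous_const.mul (Qp_cont N α)).neg)).integrableOn_Icc
  have hMbound : -Cm ≤ M := by
    have : |M| ≤ Cm := by
      rw [hM, hCm]
      refine le_trans (Finset.abs_sum_le_sum_abs _ _) (Finset.sum_le_sum fun k _ => ?_)
      rw [abs_mul]
      calc |α k| * |m k| ≤ 1 * |m k| := by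
            apply mul_le_mul_of_nonneg_right ?_ (abs_nonneg _)
            rw [← hα]; exact norm_le_pi_norm α k
        _ = |m k| := one_mul _
    linarith [abs_le.mp this |>.1]
  by_cases hcase : c/2 ≤ M
  · apply le_trans (min_le_left _ _)
    have h0 : 0 ≤ ∫ s in Set.Icc (0:ℝ) 1, Real.exp (-(t * Qp N α s)) :=
      setIntegral_nonneg measurableSet_Icc (fun s _ => (Real.exp_pos _).le)
    nlinarith
  · -- then the integral term in Jfun is ≥ c/2
    push_neg at hcase
    have hImax : max M 0 ≤ c/2 := max_le hcase.le (by linarith)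
    have hIbig : c/2 ≤ ∫ s in Set.Icc (0:ℝ) 1, max (-(Qp N α s)) 0 := by
      have := hJ
      unfold Jfun at this
      rw [← hM] at this
      linarith
    -- the set A
    set A : Set ℝ := {s ∈ Set.Icc (0:ℝ) 1 | Qp N α s ≤ -(c/4)} with hA
    have hAmeas : MeasurableSet A := by
      apply measurableSet_Icc.inter
      exact (Qp_cont N α).measurable measurableSet_Iic
    have hAsub : A ⊆ Set.Icc (0:ℝ) 1 := fun s hs => hs.1
    have hAfin : volume A < ⊤ :=
      lt_of_le_of_lt (measure_mono hAsub) (by simp [Real.volume_Icc])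
    -- pointwise bound : max(-Q) 0 ≤ indicator_A (N+1) + c/4 on Icc
    have hptwise : ∀ s ∈ Set.Icc (0:ℝ) 1,
        max (-(Qp N α s)) 0 ≤ A.indicator (fun _ => ((N:ℝ)+1)) s + c/4 := by
      intro s hs
      by_cases hsA : s ∈ A
      · rw [Set.indicator_of_mem hsA]
        have := Qp_abs_le N α hs
        rw [hα, mul_one] at this
        have := abs_le.mp this
        apply max_le <;> nlinarith
      · rw [Set.indicator_of_notMem hsA]
        have hQ : -(c/4) < Qp N α s := by
          by_contra hh
          push_neg at hh
          exact hsA ⟨hs, hh⟩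
        apply max_le <;> nlinarith
    -- integrate
    have hind_int : IntegrableOn (fun s => A.indicator (fun _ => ((N:ℝ)+1)) s + c/4)
        (Set.Icc (0:ℝ) 1) := by
      apply MeasureTheory.Integrable.add
      · exact (MeasureTheory.Integrable.indicator
          ((integrableOn_const_iff enorm_ne_top).mpr (Or.inr (by simp [Real.volume_Icc]))) hAmeas)
      · exact (integrableOn_const_iff enorm_ne_top).mpr (Or.inr (by simp [Real.volume_Icc]))
    have hIineq : (∫ s in Set.Icc (0:ℝ) 1, max (-(Qp N α s)) 0) ≤
        ((N:ℝ)+1) * (volume A).toReal + c/4 := by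
      calc (∫ s in Set.Icc (0:ℝ) 1, max (-(Qp N α s)) 0)
          ≤ ∫ s in Set.Icc (0:ℝ) 1, (A.indicator (fun _ => ((N:ℝ)+1)) s + c/4) :=
            setIntegral_mono_on
              ((((Qp_cont N α).neg).max continuous_const).integrableOn_Icc)
              hind_int measurableSet_Icc hptwise
        _ = (∫ s in Set.Icc (0:ℝ) 1, A.indicator (fun _ => ((N:ℝ)+1)) s) +
            ∫ s in Set.Icc (0:ℝ) 1, (c/4 : ℝ) := by
            apply MeasureTheory.integral_add
            · exact (MeasureTheory.Integrable.indicator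
                ((integrableOn_const_iff enorm_ne_top).mpr (Or.inr (by simp [Real.volume_Icc]))) hAmeas)
            · exact (integrableOn_const_iff enorm_ne_top).mpr (Or.inr (by simp [Real.volume_Icc]))
        _ = ((N:ℝ)+1) * (volume A).toReal + c/4 := by
            rw [setIntegral_indicator hAmeas]
            rw [Set.inter_eq_self_of_subset_right hAsub]  -- Icc ∩ A = A
            rw [setIntegral_const, setIntegral_const]
            simp [Real.volume_Icc, smul_eq_mul, mul_comm, Measure.real]
    have hμA : (c/4)/(N+1) ≤ (volume A).toReal := by
      rw [div_le_iff₀ (by positivity)]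
      nlinarith [hIbig, hIineq]
    -- lower bound the exponential integral
    have hstep1 : (∫ s in A, Real.exp (-(t * Qp N α s))) ≤
        ∫ s in Set.Icc (0:ℝ) 1, Real.exp (-(t * Qp N α s)) :=
      setIntegral_mono_set hexp_int
        (Filter.Eventually.of_forall fun s => (Real.exp_pos _).le)
        (HasSubset.Subset.eventuallyLE hAsub)
    have hstep2 : (c/4)/(N+1) * Real.exp (t * (c/4)) ≤ ∫ s in A, Real.exp (-(t * Qp N α s)) := by
      calc (c/4)/(N+1) * Real.exp (t * (c/4))
          ≤ (volume A).toReal * Real.exp (t * (c/4)) :=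
            mul_le_mul_of_nonneg_right hμA (Real.exp_pos _).le
        _ = ∫ s in A, Real.exp (t * (c/4)) := by rw [setIntegral_const, smul_eq_mul]; rfl
        _ ≤ ∫ s in A, Real.exp (-(t * Qp N α s)) := by
            apply setIntegral_mono_on
              ((integrableOn_const_iff enorm_ne_top).mpr (Or.inr hAfin))
              (hexp_int.mono_set hAsub) hAmeas
            intro s hs
            apply Real.exp_le_exp.mpr
            have := hs.2
            nlinarith
    apply le_trans (min_le_right _ _)
    have := le_trans hstep2 hstep1
    nlinarith

lemma exp_quad_le (x : ℝ) (hx : 0 ≤ x) : x^2/4 ≤ Real.exp x := by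
  have h1 : x/2 + 1 ≤ Real.exp (x/2) := Real.add_one_le_exp (x/2)
  have h2 : Real.exp (x/2) * Real.exp (x/2) = Real.exp x := by
    rw [← Real.exp_add]; ring_nf
  nlinarith [Real.exp_pos (x/2)]

set_option maxHeartbeats 1000000 in
/-- The dual potential `G` of the fractional-moment maximum entropy problem, for a moment
vector in the interior of the moment space (represented by a nonnegative density `f` which is
positive on a set of positive measure in every subinterval), is continuous and coercive:
`G(λ) → +∞` as `‖λ‖ → +∞`. -/
theorem maxEntropy_dual_potential_continuous_coercive (N : ℕ)
    (f : ℝ → ℝ) (hf_int : IntegrableOn f (Set.Icc (0 : ℝ) 1))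
    (hf_nonneg : ∀ s ∈ Set.Icc (0 : ℝ) 1, 0 ≤ f s)
    (hf_pos : ∀ a b : ℝ, 0 ≤ a → a < b → b ≤ 1 →
      0 < volume {s ∈ Set.Icc a b | 0 < f s})
    (m : Fin (N + 1) → ℝ)
    (hm : ∀ k : Fin (N + 1),
      m k = ∫ s in Set.Icc (0 : ℝ) 1, s ^ (((k : ℕ) : ℝ) / 2) * f s) :
    Continuous (fun lam : Fin (N + 1) → ℝ =>
      (∫ S in Set.Icc (0 : ℝ) 1,
        Real.exp (-∑ l : Fin (N + 1), lam l * S ^ (((l : ℕ) : ℝ) / 2))) +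
      ∑ k : Fin (N + 1), lam k * m k) ∧
    Tendsto (fun lam : Fin (N + 1) → ℝ =>
      (∫ S in Set.Icc (0 : ℝ) 1,
        Real.exp (-∑ l : Fin (N + 1), lam l * S ^ (((l : ℕ) : ℝ) / 2))) +
      ∑ k : Fin (N + 1), lam k * m k)
      (comap norm atTop) atTop := by
  constructor
  · -- continuity
    apply Continuous.add
    · rw [continuous_iff_continuousAt]
      intro lam₀
      apply MeasureTheory.continuousAt_of_dominated
        (bound := fun _ => Real.exp (((N:ℝ)+1) * (‖lam₀‖ + 1)))
      · filter_upwards with lam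
        exact (Real.continuous_exp.comp ((Qp_cont N lam).neg)).aestronglyMeasurable
      · filter_upwards [Metric.ball_mem_nhds lam₀ one_pos] with lam hlam
        filter_upwards [ae_restrict_mem measurableSet_Icc] with s hs
        rw [Real.norm_eq_abs, abs_of_pos (Real.exp_pos _)]
        apply Real.exp_le_exp.mpr
        have h1 : |Qp N lam s| ≤ ((N:ℝ)+1) * ‖lam‖ := Qp_abs_le N lam hs
        have h2 : ‖lam‖ ≤ ‖lam₀‖ + 1 := by
          have := mem_ball_iff_norm.mp hlam
          have h3 : ‖lam‖ ≤ ‖lam₀‖ + ‖lam - lam₀‖ := by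
            calc ‖lam‖ = ‖lam₀ + (lam - lam₀)‖ := by ring_nf
              _ ≤ ‖lam₀‖ + ‖lam - lam₀‖ := norm_add_le _ _
          linarith
        have h4 : -(Qp N lam s) ≤ |Qp N lam s| := neg_le_abs _
        have h5 : (0:ℝ) ≤ (N:ℝ)+1 := by positivity
        calc -(Qp N lam s) ≤ ((N:ℝ)+1) * ‖lam‖ := le_trans h4 h1
          _ ≤ ((N:ℝ)+1) * (‖lam₀‖ + 1) := by nlinarith [norm_nonneg lam]
      · exact (integrableOn_const_iff enorm_ne_top).mpr (Or.inr (by simp [Real.volume_Icc]))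
      · filter_upwards with s
        apply Continuous.continuousAt
        apply Real.continuous_exp.comp
        apply Continuous.neg
        exact continuous_finset_sum _ fun l _ => (continuous_apply l).mul continuous_const
    · exact continuous_finset_sum _ fun k _ => (continuous_apply k).mul continuous_const
  · -- coercivity
    obtain ⟨α₀, hα₀mem, hmin⟩ := (isCompact_sphere (0 : Fin (N+1) → ℝ) 1).exists_isMinOn
      (NormedSpace.sphere_nonempty.mpr zero_le_one) (Jfun_cont N m).continuousOn
    set c := Jfun N m α₀ with hc
    have hα₀ : ‖α₀‖ = 1 := by simpa using hα₀mem
    have hcpos : 0 < c := Jfun_pos N f hf_int hf_nonneg hf_pos m hm α₀ hα₀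
    set Cm := ∑ k : Fin (N+1), |m k| with hCm
    set δ := (c/4)/((N:ℝ)+1) with hδdef
    rw [tendsto_atTop]
    intro b
    have h1 : Tendsto (fun t : ℝ => t * (c/2)) atTop atTop :=
      Tendsto.atTop_mul_const (by positivity) tendsto_id
    have h2 : Tendsto (fun t : ℝ => δ * Real.exp (t * (c/4)) - t * Cm) atTop atTop := by
      have hδpos : 0 < δ := by positivity
      have htarget : Tendsto (fun t : ℝ => t * (δ * (c/4)^2/4 * t - Cm)) atTop atTop := by
        apply Tendsto.atTop_mul_atTop₀ tendsto_id
        have h5 := (Tendsto.const_mul_atTop (show (0:ℝ) < δ * (c/4)^2/4 by positivity)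
          (tendsto_id : Tendsto (fun t:ℝ => t) atTop atTop))
        have h6 := tendsto_atTop_add_const_right atTop (-Cm) h5
        apply h6.congr
        intro t
        simp only [id_eq]
        ring
      apply tendsto_atTop_mono' atTop ?_ htarget
      filter_upwards [eventually_ge_atTop (0:ℝ)] with t ht
      have hq := exp_quad_le (t * (c/4)) (by positivity)
      nlinarith
    have h3 : ∀ᶠ t in (atTop : Filter ℝ),
        b ≤ min (t * (c/2)) (δ * Real.exp (t * (c/4)) - t * Cm) :=
      ((h1.eventually_ge_atTop b).and (h2.eventually_ge_atTop b)).mono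
        (fun t ht => le_min ht.1 ht.2)
    rw [eventually_comap]
    filter_upwards [h3, eventually_gt_atTop (0:ℝ)] with t hbt htpos
    intro lam hlam
    have hlam0 : lam ≠ 0 := by
      intro h
      rw [h, norm_zero] at hlam
      exact absurd hlam.symm (ne_of_gt htpos)
    set α := ‖lam‖⁻¹ • lam with hαdef
    have hαnorm : ‖α‖ = 1 := norm_smul_inv_norm hlam0
    have hdecomp : lam = t • α := by
      rw [hαdef, smul_smul, hlam, mul_inv_cancel₀ (ne_of_gt htpos), one_smul]
    have hminle : c ≤ Jfun N m α := by
      have := isMinOn_iff.mp hmin α (by simp [Metric.mem_sphere, dist_eq_norm, hαnorm])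
      exact this
    have hkey := key_lower N m c hcpos t htpos α hαnorm hminle
    have h7 : ∀ S : ℝ, (∑ l : Fin (N + 1), lam l * S ^ (((l : ℕ) : ℝ) / 2)) = t * Qp N α S := by
      intro S
      rw [← Qp_smul N t α S, ← hdecomp]
      rfl
    have hGeq : (∫ S in Set.Icc (0 : ℝ) 1,
          Real.exp (-∑ l : Fin (N + 1), lam l * S ^ (((l : ℕ) : ℝ) / 2))) +
          ∑ k : Fin (N + 1), lam k * m k =
        (∫ s in Set.Icc (0:ℝ) 1, Real.exp (-(t * Qp N α s))) +
          t * ∑ k : Fin (N+1), α k * m k := by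
      simp_rw [h7]
      congr 1
      rw [Finset.mul_sum]
      refine Finset.sum_congr rfl fun k _ => ?_
      rw [hdecomp]
      simp [mul_assoc]
    rw [hGeq]
    exact le_trans hbt hkey
end
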